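/- Let a₁₂, a₁₃, a₁₄, a₂₃, b₂₄, b₃₄ ∈ ℂ all have modulus 1 and let r > 1 be real. Let σ be the 16×16 matrix with rows and columns indexed by pairs (i,j), 1 ≤ i, j ≤ 4, whose nonzero entries are: diagonal entries σ((i,i),(i,i)) = r for i = 1,…,4; σ((1,2),(1,2)) = σ((2,1),(2,1)) = σ((3,4),(3,4)) = σ((4,3),(4,3)) = 1; σ((1,3),(1,3)) = σ((3,1),(3,1)) = σ((2,4),(2,4)) = σ((4,2),(4,2)) = 2; σ((1,4),(1,4)) = σ((2,3),(2,3)) = σ((3,2),(3,2)) = σ((4,1),(4,1)) = 2; off-diagonal entries σ((1,2),(2,1)) = a₁₂, σ((1,3),(3,1)) = 2a₁₃, σ((1,4),(2,3)) = 1, σ((2,3),(3,2)) = a₂₃, σ((3,2),(4,1)) = a₁₄ a₂₃⁻¹, σ((1,4),(4,1)) = a₁₄, σ((2,4),(4,2)) = 2b₂₄, σ((3,4),(4,3)) = b₃₄, together with the conjugate entries making σ Hermitian (each listed off-diagonal entry z at position (u,v) is accompanied by conj(z) = z⁻¹ at (v,u), with the factor 2 preserved). Then σ is Hermitian positive semidefinite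 of rank 11 (corank 5), and its kernel is spanned by the five vectors e₁₂ − conj(a₁₂)e₂₁, e₁₃ − conj(a₁₃)e₃₁, e₁₄ − e₂₃ + conj(a₂₃)e₃₂ − conj(a₁₄)e₄₁, e₂₄ − conj(b₂₄)e₄₂, and e₃₄ − conj(b₃₄)e₄₃. -/

import Mathlib

open scoped ComplexOrder

/-- The 16×16 matrix of the 4⊗4 construction, with rows and columns indexed by pairs
`(i,j)` of `Fin 4` (0-based; `(0,1)` corresponds to the 1-based index pair `(1,2)`). -/
noncomputable def sigma4 (a12 a13 a14 a23 b24 b34 : ℂ) (r : ℝ) :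
    Matrix (Fin 4 × Fin 4) (Fin 4 × Fin 4) ℂ :=
  Matrix.of fun u v =>
    match u.1.val, u.2.val, v.1.val, v.2.val with
    | 0, 0, 0, 0 => (r : ℂ)
    | 1, 1, 1, 1 => (r : ℂ)
    | 2, 2, 2, 2 => (r : ℂ)
    | 3, 3, 3, 3 => (r : ℂ)
    | 0, 1, 0, 1 => 1
    | 1, 0, 1, 0 => 1
    | 2, 3, 2, 3 => 1
    | 3, 2, 3, 2 => 1
    | 0, 2, 0, 2 => 2
    | 2, 0, 2, 0 => 2
    | 1, 3, 1, 3 => 2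
    | 3, 1, 3, 1 => 2
    | 0, 3, 0, 3 => 2
    | 1, 2, 1, 2 => 2
    | 2, 1, 2, 1 => 2
    | 3, 0, 3, 0 => 2
    | 0, 1, 1, 0 => a12
    | 1, 0, 0, 1 => (starRingEnd ℂ) a12
    | 0, 2, 2, 0 => 2 * a13
    | 2, 0, 0, 2 => 2 * (starRingEnd ℂ) a13
    | 0, 3, 1, 2 => 1
    | 1, 2, 0, 3 => 1
    | 1, 2, 2, 1 => a23
    | 2, 1, 1, 2 => (starRingEnd ℂ) a23
    | 2, 1, 3, 0 => a14 * a23⁻¹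
    | 3, 0, 2, 1 => (starRingEnd ℂ) (a14 * a23⁻¹)
    | 0, 3, 3, 0 => a14
    | 3, 0, 0, 3 => (starRingEnd ℂ) a14
    | 1, 3, 3, 1 => 2 * b24
    | 3, 1, 1, 3 => 2 * (starRingEnd ℂ) b24
    | 2, 3, 3, 2 => b34
    | 3, 2, 2, 3 => (starRingEnd ℂ) b34
    | _, _, _, _ => 0

/-- The standard basis vector `e_{ij}` of `ℂ¹⁶ = ℂ^{Fin 4 × Fin 4}`. -/
noncomputable def e4 (i j : Fin 4) : Fin 4 × Fin 4 → ℂ := Pi.single (i, j) 1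

noncomputable def stab (a12 a13 a14 a23 b24 b34 : ℂ) (r : ℝ) :
    Fin 4 → Fin 4 → Fin 4 → Fin 4 → ℂ :=
![
![
  ![![(r : ℂ), 0, 0, 0], ![0, 0, 0, 0], ![0, 0, 0, 0], ![0, 0, 0, 0]],
  ![![0, 1, 0, 0], ![a12, 0, 0, 0], ![0, 0, 0, 0], ![0, 0, 0, 0]],
  ![![0, 0, 2, 0], ![0, 0, 0, 0], ![2 * a13, 0, 0, 0], ![0, 0, 0, 0]],
  ![![0, 0, 0, 2], ![0, 0, 1, 0], ![0, 0, 0, 0], ![a14, 0, 0, 0]]],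
![
  ![![0, (starRingEnd ℂ) (a12), 0, 0], ![1, 0, 0, 0], ![0, 0, 0, 0], ![0, 0, 0, 0]],
  ![![0, 0, 0, 0], ![0, (r : ℂ), 0, 0], ![0, 0, 0, 0], ![0, 0, 0, 0]],
  ![![0, 0, 0, 1], ![0, 0, 2, 0], ![0, a23, 0, 0], ![0, 0, 0, 0]],
  ![![0, 0, 0, 0], ![0, 0, 0, 2], ![0, 0, 0, 0], ![0, 2 * b24, 0, 0]]],
![
  ![![0, 0, 2 * (starRingEnd ℂ) (a13), 0], ![0, 0, 0, 0], ![2, 0, 0, 0], ![0, 0, 0, 0]],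
  ![![0, 0, 0, 0], ![0, 0, (starRingEnd ℂ) (a23), 0], ![0, 2, 0, 0], ![a14 * a23⁻¹, 0, 0, 0]],
  ![![0, 0, 0, 0], ![0, 0, 0, 0], ![0, 0, (r : ℂ), 0], ![0, 0, 0, 0]],
  ![![0, 0, 0, 0], ![0, 0, 0, 0], ![0, 0, 0, 1], ![0, 0, b34, 0]]],
![
  ![![0, 0, 0, (starRingEnd ℂ) (a14)], ![0, 0, 0, 0], ![0, (starRingEnd ℂ) (a14 * a23⁻¹), 0, 0], ![2, 0, 0, 0]],
  ![![0, 0, 0, 0], ![0, 0, 0, 2 * (starRingEnd ℂ) (b24)], ![0, 0, 0, 0], ![0, 2, 0, 0]],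
  ![![0, 0, 0, 0], ![0, 0, 0, 0], ![0, 0, 0, (starRingEnd ℂ) (b34)], ![0, 0, 1, 0]],
  ![![0, 0, 0, 0], ![0, 0, 0, 0], ![0, 0, 0, 0], ![0, 0, 0, (r : ℂ)]]]]

set_option maxHeartbeats 2000000 in
theorem sigma4_eq (a12 a13 a14 a23 b24 b34 : ℂ) (r : ℝ) :
    sigma4 a12 a13 a14 a23 b24 b34 r =
      Matrix.of fun u v => stab a12 a13 a14 a23 b24 b34 r u.1 u.2 v.1 v.2 := by
  ext ⟨i, j⟩ ⟨k, l⟩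
  fin_cases i <;> fin_cases j <;> fin_cases k <;> fin_cases l <;> rfl

set_option maxHeartbeats 4000000 in
theorem stab_herm (a12 a13 a14 a23 b24 b34 : ℂ) (r : ℝ) :
    ∀ i j k l : Fin 4, (starRingEnd ℂ) (stab a12 a13 a14 a23 b24 b34 r k l i j)
      = stab a12 a13 a14 a23 b24 b34 r i j k l := by
  intro i j k l
  fin_cases i <;> fin_cases j <;> fin_cases k <;> fin_cases l <;>
    simp [stab, Matrix.vecHead, Matrix.vecTail, Function.comp, map_ofNat,
      Complex.conj_conj, Complex.conj_ofReal]

set_option maxHeartbeats 2000000 in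
set_option maxRecDepth 4000 in
theorem quad_eq (a12 a13 a14 a23 b24 b34 : ℂ) (r : ℝ) (x : Fin 4 × Fin 4 → ℂ)
    (hinv : a23⁻¹ = (starRingEnd ℂ) a23)
    (n12 : a12 * (starRingEnd ℂ) a12 = 1) (n13 : a13 * (starRingEnd ℂ) a13 = 1)
    (n14 : a14 * (starRingEnd ℂ) a14 = 1) (n23 : a23 * (starRingEnd ℂ) a23 = 1)
    (n24 : b24 * (starRingEnd ℂ) b24 = 1) (n34 : b34 * (starRingEnd ℂ) b34 = 1) :
    dotProduct (star x) ((sigma4 a12 a13 a14 a23 b24 b34 r).mulVec x) =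
      (r:ℂ) * (x (0,0) * (starRingEnd ℂ) (x (0,0))) + (r:ℂ) * (x (1,1) * (starRingEnd ℂ) (x (1,1)))
      + (r:ℂ) * (x (2,2) * (starRingEnd ℂ) (x (2,2))) + (r:ℂ) * (x (3,3) * (starRingEnd ℂ) (x (3,3)))
      + (x (0,1) + a12 * x (1,0)) * ((starRingEnd ℂ) (x (0,1)) + (starRingEnd ℂ) a12 * (starRingEnd ℂ) (x (1,0)))
      + 2 * ((x (0,2) + a13 * x (2,0)) * ((starRingEnd ℂ) (x (0,2)) + (starRingEnd ℂ) a13 * (starRingEnd ℂ) (x (2,0))))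
      + 2 * ((x (1,3) + b24 * x (3,1)) * ((starRingEnd ℂ) (x (1,3)) + (starRingEnd ℂ) b24 * (starRingEnd ℂ) (x (3,1))))
      + (x (2,3) + b34 * x (3,2)) * ((starRingEnd ℂ) (x (2,3)) + (starRingEnd ℂ) b34 * (starRingEnd ℂ) (x (3,2)))
      + (x (0,3) + a14 * x (3,0)) * ((starRingEnd ℂ) (x (0,3)) + (starRingEnd ℂ) a14 * (starRingEnd ℂ) (x (3,0)))
      + (x (0,3) + x (1,2)) * ((starRingEnd ℂ) (x (0,3)) + (starRingEnd ℂ) (x (1,2)))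
      + (x (1,2) + a23 * x (2,1)) * ((starRingEnd ℂ) (x (1,2)) + (starRingEnd ℂ) a23 * (starRingEnd ℂ) (x (2,1)))
      + (a23 * x (2,1) + a14 * x (3,0)) * ((starRingEnd ℂ) a23 * (starRingEnd ℂ) (x (2,1)) + (starRingEnd ℂ) a14 * (starRingEnd ℂ) (x (3,0))) := by
  rw [sigma4_eq]
  simp only [dotProduct, Matrix.mulVec, Fintype.sum_prod_type, Fin.sum_univ_four,
    Matrix.of_apply, Pi.star_apply, stab, Matrix.cons_val_zero, Matrix.cons_val_one,
    Matrix.cons_val_two, Matrix.cons_val_three, Matrix.head_cons, Matrix.tail_cons, hinv, map_mul, zero_mul, mul_zero, add_zero, zero_add,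
    RCLike.star_def, Complex.conj_conj]
  linear_combination (-(x (1,0) * (starRingEnd ℂ) (x (1,0)))) * n12
    + (-(2 * (x (2,0) * (starRingEnd ℂ) (x (2,0))))) * n13
    + (-(2 * (x (3,1) * (starRingEnd ℂ) (x (3,1))))) * n24
    + (-(x (3,2) * (starRingEnd ℂ) (x (3,2)))) * n34
    + (-(2 * (x (3,0) * (starRingEnd ℂ) (x (3,0))))) * n14
    + (-(2 * (x (2,1) * (starRingEnd ℂ) (x (2,1))))) * n23

set_option maxHeartbeats 2000000 in
set_option maxRecDepth 4000 in
theorem mulVec_eval (a12 a13 a14 a23 b24 b34 : ℂ) (r : ℝ) (x : Fin 4 × Fin 4 → ℂ)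
    (hinv : a23⁻¹ = (starRingEnd ℂ) a23) :
    (sigma4 a12 a13 a14 a23 b24 b34 r).mulVec x = fun u =>
      (![![(r:ℂ) * x (0,0), x (0,1) + a12 * x (1,0), 2 * x (0,2) + 2 * a13 * x (2,0),
           2 * x (0,3) + x (1,2) + a14 * x (3,0)],
         ![(starRingEnd ℂ) a12 * x (0,1) + x (1,0), (r:ℂ) * x (1,1),
           x (0,3) + 2 * x (1,2) + a23 * x (2,1), 2 * x (1,3) + 2 * b24 * x (3,1)],
         ![2 * (starRingEnd ℂ) a13 * x (0,2) + 2 * x (2,0),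
           (starRingEnd ℂ) a23 * x (1,2) + 2 * x (2,1) + a14 * (starRingEnd ℂ) a23 * x (3,0),
           (r:ℂ) * x (2,2), x (2,3) + b34 * x (3,2)],
         ![(starRingEnd ℂ) a14 * x (0,3) + (starRingEnd ℂ) a14 * a23 * x (2,1) + 2 * x (3,0),
           2 * (starRingEnd ℂ) b24 * x (1,3) + 2 * x (3,1),
           (starRingEnd ℂ) b34 * x (2,3) + x (3,2), (r:ℂ) * x (3,3)]] : Fin 4 → Fin 4 → ℂ)
        u.1 u.2 := by
  rw [sigma4_eq]
  funext u
  obtain ⟨i, j⟩ := u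
  fin_cases i <;> fin_cases j <;>
    · simp [Matrix.mulVec, dotProduct, Fintype.sum_prod_type, Fin.sum_univ_four,
        stab, Matrix.cons_val_two, Matrix.cons_val_three, Matrix.tail_cons, hinv,
        map_mul, Complex.conj_conj, Matrix.vecHead, Matrix.vecTail]

set_option maxHeartbeats 2000000 in
set_option maxRecDepth 8000 in
theorem stmt12 (a12 a13 a14 a23 b24 b34 : ℂ)
    (h12 : ‖a12‖ = 1) (h13 : ‖a13‖ = 1) (h14 : ‖a14‖ = 1)
    (h23 : ‖a23‖ = 1) (h24 : ‖b24‖ = 1) (h34 : ‖b34‖ = 1)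
    (r : ℝ) (hr : 1 < r) :
    (sigma4 a12 a13 a14 a23 b24 b34 r).PosSemidef ∧
    (sigma4 a12 a13 a14 a23 b24 b34 r).rank = 11 ∧
    ∀ x : Fin 4 × Fin 4 → ℂ,
      (sigma4 a12 a13 a14 a23 b24 b34 r).mulVec x = 0 ↔
      x ∈ Submodule.span ℂ
        ({ e4 0 1 - (starRingEnd ℂ) a12 • e4 1 0,
           e4 0 2 - (starRingEnd ℂ) a13 • e4 2 0,
           e4 0 3 - e4 1 2 + (starRingEnd ℂ) a23 • e4 2 1 - (starRingEnd ℂ) a14 • e4 3 0,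
           e4 1 3 - (starRingEnd ℂ) b24 • e4 3 1,
           e4 2 3 - (starRingEnd ℂ) b34 • e4 3 2 } : Set (Fin 4 × Fin 4 → ℂ)) := by
  have n12 : a12 * (starRingEnd ℂ) a12 = 1 := by
    rw [Complex.mul_conj, Complex.normSq_eq_norm_sq, h12]; norm_num
  have n13 : a13 * (starRingEnd ℂ) a13 = 1 := by
    rw [Complex.mul_conj, Complex.normSq_eq_norm_sq, h13]; norm_num
  have n14 : a14 * (starRingEnd ℂ) a14 = 1 := by
    rw [Complex.mul_conj, Complex.normSq_eq_norm_sq, h14]; norm_num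
  have n23 : a23 * (starRingEnd ℂ) a23 = 1 := by
    rw [Complex.mul_conj, Complex.normSq_eq_norm_sq, h23]; norm_num
  have n24 : b24 * (starRingEnd ℂ) b24 = 1 := by
    rw [Complex.mul_conj, Complex.normSq_eq_norm_sq, h24]; norm_num
  have n34 : b34 * (starRingEnd ℂ) b34 = 1 := by
    rw [Complex.mul_conj, Complex.normSq_eq_norm_sq, h34]; norm_num
  have hinv : a23⁻¹ = (starRingEnd ℂ) a23 := inv_eq_of_mul_eq_one_right n23
  have hrpos : (0:ℝ) < r := lt_trans zero_lt_one hr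
  have hrne : (r:ℂ) ≠ 0 := by exact_mod_cast hrpos.ne'
  have hr0 : (0:ℂ) ≤ (r:ℂ) := by
    rw [Complex.zero_le_real]; exact hrpos.le
  have hN : ∀ z : ℂ, 0 ≤ z * (starRingEnd ℂ) z := fun z => by
    rw [Complex.mul_conj, Complex.zero_le_real]; exact Complex.normSq_nonneg z
  have herm : (sigma4 a12 a13 a14 a23 b24 b34 r).IsHermitian := by
    rw [sigma4_eq]
    ext u v
    obtain ⟨i, j⟩ := u; obtain ⟨k, l⟩ := v
    exact stab_herm a12 a13 a14 a23 b24 b34 r i j k l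
  have psd : (sigma4 a12 a13 a14 a23 b24 b34 r).PosSemidef := by
    refine Matrix.posSemidef_iff_dotProduct_mulVec.mpr ⟨herm, fun x => ?_⟩
    rw [quad_eq a12 a13 a14 a23 b24 b34 r x hinv n12 n13 n14 n23 n24 n34]
    have t1 := hN (x (0,1) + a12 * x (1,0))
    have t2 := hN (x (0,2) + a13 * x (2,0))
    have t3 := hN (x (1,3) + b24 * x (3,1))
    have t4 := hN (x (2,3) + b34 * x (3,2))
    have t5 := hN (x (0,3) + a14 * x (3,0))
    have t6 := hN (x (0,3) + x (1,2))
    have t7 := hN (x (1,2) + a23 * x (2,1))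
    have t8 := hN (a23 * x (2,1) + a14 * x (3,0))
    simp only [map_add, map_mul] at t1 t2 t3 t4 t5 t6 t7 t8
    have h2 : (0:ℂ) ≤ 2 := by rw [show ((2:ℂ) = ((2:ℝ):ℂ)) by norm_num, Complex.zero_le_real]; norm_num
    apply_rules [add_nonneg, mul_nonneg, hN, hr0]
  -- the main kernel characterization
  have main : ∀ x : Fin 4 × Fin 4 → ℂ,
      (sigma4 a12 a13 a14 a23 b24 b34 r).mulVec x = 0 ↔
      x ∈ Submodule.span ℂ
        ({ e4 0 1 - (starRingEnd ℂ) a12 • e4 1 0,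
           e4 0 2 - (starRingEnd ℂ) a13 • e4 2 0,
           e4 0 3 - e4 1 2 + (starRingEnd ℂ) a23 • e4 2 1 - (starRingEnd ℂ) a14 • e4 3 0,
           e4 1 3 - (starRingEnd ℂ) b24 • e4 3 1,
           e4 2 3 - (starRingEnd ℂ) b34 • e4 3 2 } : Set (Fin 4 × Fin 4 → ℂ)) := by
    intro x
    constructor
    · intro hx
      rw [mulVec_eval a12 a13 a14 a23 b24 b34 r x hinv] at hx
      have H : ∀ u : Fin 4 × Fin 4, _ := fun u => congrFun hx u
      have h00 : x (0,0) = 0 := by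
        have h := H (0,0); simp [hrne] at h; exact h
      have h11 : x (1,1) = 0 := by
        have h := H (1,1); simp [hrne] at h; exact h
      have h22 : x (2,2) = 0 := by
        have h := H (2,2); simp [hrne] at h; exact h
      have h33 : x (3,3) = 0 := by
        have h := H (3,3); simp [hrne] at h; exact h
      have e01 : x (0,1) + a12 * x (1,0) = 0 := by
        have h := H (0,1); simpa using h
      have e02 : 2 * x (0,2) + 2 * a13 * x (2,0) = 0 := by
        have h := H (0,2); simpa using h
      have e13 : 2 * x (1,3) + 2 * b24 * x (3,1) = 0 := by
        have h := H (1,3); simpa using h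
      have e23 : x (2,3) + b34 * x (3,2) = 0 := by
        have h := H (2,3); simpa using h
      have eA : 2 * x (0,3) + x (1,2) + a14 * x (3,0) = 0 := by
        have h := H (0,3); simpa using h
      have eB : x (0,3) + 2 * x (1,2) + a23 * x (2,1) = 0 := by
        have h := H (1,2); simpa using h
      have eC : (starRingEnd ℂ) a23 * x (1,2) + 2 * x (2,1)
          + a14 * (starRingEnd ℂ) a23 * x (3,0) = 0 := by
        have h := H (2,1); simpa using h
      have h10 : x (1,0) = -((starRingEnd ℂ) a12) * x (0,1) := by
        linear_combination (starRingEnd ℂ) a12 * e01 - x (1,0) * n12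
      have h20 : x (2,0) = -((starRingEnd ℂ) a13) * x (0,2) := by
        linear_combination ((starRingEnd ℂ) a13 / 2) * e02 - x (2,0) * n13
      have h31 : x (3,1) = -((starRingEnd ℂ) b24) * x (1,3) := by
        linear_combination ((starRingEnd ℂ) b24 / 2) * e13 - x (3,1) * n24
      have h32 : x (3,2) = -((starRingEnd ℂ) b34) * x (2,3) := by
        linear_combination (starRingEnd ℂ) b34 * e23 - x (3,2) * n34
      have h12e : x (1,2) = -x (0,3) := by
        linear_combination (1/4) * eA + (1/2) * eB - (a23/4) * eC
          + (1/4) * (x (1,2) + a14 * x (3,0)) * n23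
      have hs1 : a23 * x (2,1) = x (0,3) := by
        linear_combination eB - 2 * h12e
      have h21 : x (2,1) = (starRingEnd ℂ) a23 * x (0,3) := by
        linear_combination (starRingEnd ℂ) a23 * hs1 - x (2,1) * n23
      have ht1 : a14 * x (3,0) = -x (0,3) := by
        linear_combination eA - h12e
      have h30 : x (3,0) = -((starRingEnd ℂ) a14) * x (0,3) := by
        linear_combination (starRingEnd ℂ) a14 * ht1 - x (3,0) * n14
      have hxeq : x = x (0,1) • (e4 0 1 - (starRingEnd ℂ) a12 • e4 1 0)
          + x (0,2) • (e4 0 2 - (starRingEnd ℂ) a13 • e4 2 0)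
          + x (0,3) • (e4 0 3 - e4 1 2 + (starRingEnd ℂ) a23 • e4 2 1
              - (starRingEnd ℂ) a14 • e4 3 0)
          + x (1,3) • (e4 1 3 - (starRingEnd ℂ) b24 • e4 3 1)
          + x (2,3) • (e4 2 3 - (starRingEnd ℂ) b34 • e4 3 2) := by
        funext u
        obtain ⟨i, j⟩ := u
        fin_cases i <;> fin_cases j <;>
          simp [e4, Pi.single_apply, Prod.ext_iff] <;>
          first
          | rfl
          | exact h00
          | exact h11
          | exact h22
          | exact h33
          | linear_combination h10
          | linear_combination h20
          | linear_combination h31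
          | linear_combination h32
          | linear_combination h12e
          | linear_combination h21
          | linear_combination h30
      rw [hxeq]
      refine Submodule.add_mem _ (Submodule.add_mem _ (Submodule.add_mem _
        (Submodule.add_mem _ ?_ ?_) ?_) ?_) ?_
      · exact Submodule.smul_mem _ _ (Submodule.subset_span (Set.mem_insert _ _))
      · exact Submodule.smul_mem _ _ (Submodule.subset_span
          (Set.mem_insert_of_mem _ (Set.mem_insert _ _)))
      · exact Submodule.smul_mem _ _ (Submodule.subset_span
          (Set.mem_insert_of_mem _ (Set.mem_insert_of_mem _ (Set.mem_insert _ _))))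
      · exact Submodule.smul_mem _ _ (Submodule.subset_span
          (Set.mem_insert_of_mem _ (Set.mem_insert_of_mem _ (Set.mem_insert_of_mem _
            (Set.mem_insert _ _)))))
      · exact Submodule.smul_mem _ _ (Submodule.subset_span
          (Set.mem_insert_of_mem _ (Set.mem_insert_of_mem _ (Set.mem_insert_of_mem _
            (Set.mem_insert_of_mem _ (Set.mem_singleton _))))))
    · intro hx
      have hv1 : (sigma4 a12 a13 a14 a23 b24 b34 r).mulVec
          (e4 0 1 - (starRingEnd ℂ) a12 • e4 1 0) = 0 := by
        rw [mulVec_eval a12 a13 a14 a23 b24 b34 r _ hinv]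
        funext u
        obtain ⟨i, j⟩ := u
        fin_cases i <;> fin_cases j <;>
          simp [e4, Pi.single_apply, Prod.ext_iff] <;>
          first
          | rfl
          | linear_combination n12
          | linear_combination -n12
          | linear_combination (starRingEnd ℂ) a12 * n12
          | linear_combination -((starRingEnd ℂ) a12) * n12
      have hv2 : (sigma4 a12 a13 a14 a23 b24 b34 r).mulVec
          (e4 0 2 - (starRingEnd ℂ) a13 • e4 2 0) = 0 := by
        rw [mulVec_eval a12 a13 a14 a23 b24 b34 r _ hinv]
        funext u
        obtain ⟨i, j⟩ := u
        fin_cases i <;> fin_cases j <;>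
          simp [e4, Pi.single_apply, Prod.ext_iff] <;>
          first
          | rfl
          | linear_combination 2 * n13
          | linear_combination (-2) * n13
          | linear_combination 2 * (starRingEnd ℂ) a13 * n13
          | linear_combination (-2) * (starRingEnd ℂ) a13 * n13
      have hv3 : (sigma4 a12 a13 a14 a23 b24 b34 r).mulVec
          (e4 0 3 - e4 1 2 + (starRingEnd ℂ) a23 • e4 2 1
            - (starRingEnd ℂ) a14 • e4 3 0) = 0 := by
        rw [mulVec_eval a12 a13 a14 a23 b24 b34 r _ hinv]
        funext u
        obtain ⟨i, j⟩ := u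
        fin_cases i <;> fin_cases j <;>
          simp [e4, Pi.single_apply, Prod.ext_iff] <;>
          first
          | rfl
          | linear_combination n14
          | linear_combination -n14
          | linear_combination n23
          | linear_combination -n23
          | linear_combination (starRingEnd ℂ) a23 * n14
          | linear_combination -((starRingEnd ℂ) a23) * n14
          | linear_combination (starRingEnd ℂ) a14 * n23
          | linear_combination -((starRingEnd ℂ) a14) * n23
      have hv4 : (sigma4 a12 a13 a14 a23 b24 b34 r).mulVec
          (e4 1 3 - (starRingEnd ℂ) b24 • e4 3 1) = 0 := by
        rw [mulVec_eval a12 a13 a14 a23 b24 b34 r _ hinv]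
        funext u
        obtain ⟨i, j⟩ := u
        fin_cases i <;> fin_cases j <;>
          simp [e4, Pi.single_apply, Prod.ext_iff] <;>
          first
          | rfl
          | linear_combination 2 * n24
          | linear_combination (-2) * n24
          | linear_combination 2 * (starRingEnd ℂ) b24 * n24
          | linear_combination (-2) * (starRingEnd ℂ) b24 * n24
      have hv5 : (sigma4 a12 a13 a14 a23 b24 b34 r).mulVec
          (e4 2 3 - (starRingEnd ℂ) b34 • e4 3 2) = 0 := by
        rw [mulVec_eval a12 a13 a14 a23 b24 b34 r _ hinv]
        funext u
        obtain ⟨i, j⟩ := u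
        fin_cases i <;> fin_cases j <;>
          simp [e4, Pi.single_apply, Prod.ext_iff] <;>
          first
          | rfl
          | linear_combination n34
          | linear_combination -n34
          | linear_combination (starRingEnd ℂ) b34 * n34
          | linear_combination -((starRingEnd ℂ) b34) * n34
      have hle : Submodule.span ℂ
          ({ e4 0 1 - (starRingEnd ℂ) a12 • e4 1 0,
             e4 0 2 - (starRingEnd ℂ) a13 • e4 2 0,
             e4 0 3 - e4 1 2 + (starRingEnd ℂ) a23 • e4 2 1 - (starRingEnd ℂ) a14 • e4 3 0,
             e4 1 3 - (starRingEnd ℂ) b24 • e4 3 1,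
             e4 2 3 - (starRingEnd ℂ) b34 • e4 3 2 } : Set (Fin 4 × Fin 4 → ℂ)) ≤
          LinearMap.ker (sigma4 a12 a13 a14 a23 b24 b34 r).mulVecLin := by
        rw [Submodule.span_le]
        rintro y hy
        simp only [Set.mem_insert_iff, Set.mem_singleton_iff] at hy
        rcases hy with rfl | rfl | rfl | rfl | rfl
        · simpa [LinearMap.mem_ker, Matrix.mulVecLin_apply] using hv1
        · simpa [LinearMap.mem_ker, Matrix.mulVecLin_apply] using hv2
        · simpa [LinearMap.mem_ker, Matrix.mulVecLin_apply] using hv3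
        · simpa [LinearMap.mem_ker, Matrix.mulVecLin_apply] using hv4
        · simpa [LinearMap.mem_ker, Matrix.mulVecLin_apply] using hv5
      have := hle hx
      rw [LinearMap.mem_ker, Matrix.mulVecLin_apply] at this
      exact this
  refine ⟨psd, ?_, main⟩
  -- rank
  have hker_eq : LinearMap.ker (sigma4 a12 a13 a14 a23 b24 b34 r).mulVecLin =
      Submodule.span ℂ
        ({ e4 0 1 - (starRingEnd ℂ) a12 • e4 1 0,
           e4 0 2 - (starRingEnd ℂ) a13 • e4 2 0,
           e4 0 3 - e4 1 2 + (starRingEnd ℂ) a23 • e4 2 1 - (starRingEnd ℂ) a14 • e4 3 0,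
           e4 1 3 - (starRingEnd ℂ) b24 • e4 3 1,
           e4 2 3 - (starRingEnd ℂ) b34 • e4 3 2 } : Set (Fin 4 × Fin 4 → ℂ)) := by
    ext y
    rw [LinearMap.mem_ker, Matrix.mulVecLin_apply]
    exact main y
  have hli : LinearIndependent ℂ
      ![e4 0 1 - (starRingEnd ℂ) a12 • e4 1 0,
        e4 0 2 - (starRingEnd ℂ) a13 • e4 2 0,
        e4 0 3 - e4 1 2 + (starRingEnd ℂ) a23 • e4 2 1 - (starRingEnd ℂ) a14 • e4 3 0,
        e4 1 3 - (starRingEnd ℂ) b24 • e4 3 1,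
        e4 2 3 - (starRingEnd ℂ) b34 • e4 3 2] := by
    rw [Fintype.linearIndependent_iff]
    intro g hg
    have hg01 := congrFun hg (0,1)
    have hg02 := congrFun hg (0,2)
    have hg03 := congrFun hg (0,3)
    have hg13 := congrFun hg (1,3)
    have hg23 := congrFun hg (2,3)
    simp [Fin.sum_univ_five, e4, Pi.single_apply, Prod.ext_iff, Matrix.vecHead,
      Matrix.vecTail] at hg01 hg02 hg03 hg13 hg23
    intro i
    fin_cases i
    · simpa using hg01
    · simpa using hg02
    · simpa using hg03
    · simpa using hg13
    · simpa using hg23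
  have hrange : ({ e4 0 1 - (starRingEnd ℂ) a12 • e4 1 0,
           e4 0 2 - (starRingEnd ℂ) a13 • e4 2 0,
           e4 0 3 - e4 1 2 + (starRingEnd ℂ) a23 • e4 2 1 - (starRingEnd ℂ) a14 • e4 3 0,
           e4 1 3 - (starRingEnd ℂ) b24 • e4 3 1,
           e4 2 3 - (starRingEnd ℂ) b34 • e4 3 2 } : Set (Fin 4 × Fin 4 → ℂ)) =
      Set.range ![e4 0 1 - (starRingEnd ℂ) a12 • e4 1 0,
        e4 0 2 - (starRingEnd ℂ) a13 • e4 2 0,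
        e4 0 3 - e4 1 2 + (starRingEnd ℂ) a23 • e4 2 1 - (starRingEnd ℂ) a14 • e4 3 0,
        e4 1 3 - (starRingEnd ℂ) b24 • e4 3 1,
        e4 2 3 - (starRingEnd ℂ) b34 • e4 3 2] := by
    ext y
    simp [Matrix.range_cons, Matrix.range_empty]
    tauto
  have h5 : Module.finrank ℂ
      (Submodule.span ℂ ({ e4 0 1 - (starRingEnd ℂ) a12 • e4 1 0,
           e4 0 2 - (starRingEnd ℂ) a13 • e4 2 0,
           e4 0 3 - e4 1 2 + (starRingEnd ℂ) a23 • e4 2 1 - (starRingEnd ℂ) a14 • e4 3 0,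
           e4 1 3 - (starRingEnd ℂ) b24 • e4 3 1,
           e4 2 3 - (starRingEnd ℂ) b34 • e4 3 2 } : Set (Fin 4 × Fin 4 → ℂ))) = 5 := by
    rw [hrange, finrank_span_eq_card hli]
    simp
  have h1 := LinearMap.finrank_range_add_finrank_ker
    (sigma4 a12 a13 a14 a23 b24 b34 r).mulVecLin
  rw [hker_eq, h5] at h1
  have h16 : Module.finrank ℂ (Fin 4 × Fin 4 → ℂ) = 16 := by simp
  rw [h16] at h1
  have hdef : (sigma4 a12 a13 a14 a23 b24 b34 r).rank =
      Module.finrank ℂ (LinearMap.range (sigma4 a12 a13 a14 a23 b24 b34 r).mulVecLin) := rfl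
  omega
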